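/- Let A ∈ SL(2,ℝ) be written A = diag(λ₁,λ₁⁻¹)·D·diag(λ₀,λ₀⁻¹) with ‖D‖ ≤ C₀, min(λ₀,λ₁) ≥ λ̄, and ∠(D(1,0)ᵀ,(0,1)ᵀ) > κ > λ̄^{-1/4}. Then, provided λ̄ exceeds a constant depending only on C₀, the operator norm of A satisfies ‖A‖ ≥ c·C₀⁻¹·λ₀·λ₁·κ for some absolute constant c > 0. -/

import Mathlib

open Real

noncomputable def vnorm (x : Fin 2 → ℝ) : ℝ := Real.sqrt (x 0 ^ 2 + x 1 ^ 2)

noncomputable def opNorm2 (A : Matrix (Fin 2) (Fin 2) ℝ) : ℝ :=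
  ⨆ θ : ℝ, vnorm (A.mulVec ![Real.cos θ, Real.sin θ])

noncomputable def argOf (x : Fin 2 → ℝ) : ℝ := Complex.arg (x 0 + x 1 * Complex.I)

noncomputable def pangle (x y : Fin 2 → ℝ) : ℝ :=
  ‖((argOf x - argOf y : ℝ) : AddCircle (π : ℝ))‖

lemma vnorm_nonneg (x : Fin 2 → ℝ) : 0 ≤ vnorm x := Real.sqrt_nonneg _

lemma abs_fst_le_vnorm (x : Fin 2 → ℝ) : |x 0| ≤ vnorm x := by
  rw [vnorm, ← Real.sqrt_sq_eq_abs]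
  exact Real.sqrt_le_sqrt (by nlinarith [sq_nonneg (x 1)])

lemma vnorm_le_sum (x : Fin 2 → ℝ) : vnorm x ≤ |x 0| + |x 1| := by
  rw [vnorm]
  have h : x 0 ^ 2 + x 1 ^ 2 ≤ (|x 0| + |x 1|) ^ 2 := by
    have := abs_nonneg (x 0); have := abs_nonneg (x 1)
    nlinarith [sq_abs (x 0), sq_abs (x 1), mul_nonneg (abs_nonneg (x 0)) (abs_nonneg (x 1))]
  calc Real.sqrt (x 0 ^ 2 + x 1 ^ 2) ≤ Real.sqrt ((|x 0| + |x 1|)^2) := Real.sqrt_le_sqrt h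
    _ = |x 0| + |x 1| := Real.sqrt_sq (by positivity)

lemma bdd (A : Matrix (Fin 2) (Fin 2) ℝ) :
    BddAbove (Set.range fun θ : ℝ => vnorm (A.mulVec ![Real.cos θ, Real.sin θ])) := by
  refine ⟨|A 0 0| + |A 0 1| + (|A 1 0| + |A 1 1|), ?_⟩
  rintro _ ⟨θ, rfl⟩
  have h0 : |A.mulVec ![Real.cos θ, Real.sin θ] 0| ≤ |A 0 0| + |A 0 1| := by
    simp only [Matrix.mulVec, dotProduct, Fin.sum_univ_two, Matrix.cons_val_zero,
      Matrix.cons_val_one, Matrix.head_cons]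
    calc |A 0 0 * Real.cos θ + A 0 1 * Real.sin θ|
        ≤ |A 0 0 * Real.cos θ| + |A 0 1 * Real.sin θ| := abs_add_le _ _
      _ ≤ |A 0 0| * 1 + |A 0 1| * 1 := by
          rw [abs_mul, abs_mul]
          gcongr <;> [exact Real.abs_cos_le_one θ; exact Real.abs_sin_le_one θ]
      _ = |A 0 0| + |A 0 1| := by ring
  have h1 : |A.mulVec ![Real.cos θ, Real.sin θ] 1| ≤ |A 1 0| + |A 1 1| := by
    simp only [Matrix.mulVec, dotProduct, Fin.sum_univ_two, Matrix.cons_val_zero,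
      Matrix.cons_val_one, Matrix.head_cons]
    calc |A 1 0 * Real.cos θ + A 1 1 * Real.sin θ|
        ≤ |A 1 0 * Real.cos θ| + |A 1 1 * Real.sin θ| := abs_add_le _ _
      _ ≤ |A 1 0| * 1 + |A 1 1| * 1 := by
          rw [abs_mul, abs_mul]
          gcongr <;> [exact Real.abs_cos_le_one θ; exact Real.abs_sin_le_one θ]
      _ = |A 1 0| + |A 1 1| := by ring
  calc vnorm (A.mulVec ![Real.cos θ, Real.sin θ]) ≤ _ + _ := vnorm_le_sum _
    _ ≤ _ := add_le_add h0 h1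

lemma le_opNorm2 (A : Matrix (Fin 2) (Fin 2) ℝ) (θ : ℝ) :
    vnorm (A.mulVec ![Real.cos θ, Real.sin θ]) ≤ opNorm2 A :=
  le_ciSup (bdd A) θ

-- pangle lemma
lemma pangle_le (x : Fin 2 → ℝ) : pangle x ![0,1] ≤ π / 2 := by
  rw [pangle, AddCircle.norm_eq]
  set t := argOf x - argOf ![0,1]
  have h := abs_sub_round (π⁻¹ * t)
  have hπ := Real.pi_pos
  have heq : t - (round (π⁻¹ * t):ℝ) * π = π * (π⁻¹ * t - round (π⁻¹ * t)) := by
    field_simp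
  calc |t - (round (π⁻¹ * t):ℝ) * π| = π * |π⁻¹ * t - round (π⁻¹ * t)| := by
        rw [heq, abs_mul, abs_of_pos hπ]
    _ ≤ π * (1/2) := by gcongr
    _ = π / 2 := by ring

lemma sin_pangle (x : Fin 2 → ℝ) (hx : ¬(x 0 = 0 ∧ x 1 = 0)) :
    |x 0| = Real.sin (pangle x ![0,1]) * vnorm x := by
  set z : ℂ := x 0 + x 1 * Complex.I with hz
  have hz0 : z ≠ 0 := by
    intro h
    apply hx
    constructor
    · have := congrArg Complex.re h; simpa [hz] using this
    · have := congrArg Complex.im h; simpa [hz] using this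
  have habs : ‖z‖ = vnorm x := by
    rw [Complex.norm_def, Complex.normSq_apply, vnorm]
    congr 1 <;> simp [hz] <;> ring
  have harg1 : argOf ![0,1] = π / 2 := by
    simp [argOf, Complex.arg_I]
  have hcos : Real.cos (argOf x) = x 0 / ‖z‖ := by
    rw [argOf, ← hz, Complex.cos_arg hz0]
    simp [hz]
  rw [pangle, harg1, AddCircle.norm_eq]
  set t := argOf x - π/2 with ht
  set k := round (π⁻¹ * t)
  have hle : |t - k * π| ≤ π/2 := by
    have h := abs_sub_round (π⁻¹ * t)
    have hπ := Real.pi_pos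
    have heq : t - (k:ℝ) * π = π * (π⁻¹ * t - k) := by field_simp
    calc |t - (k:ℝ) * π| = π * |π⁻¹ * t - k| := by rw [heq, abs_mul, abs_of_pos hπ]
      _ ≤ π * (1/2) := by gcongr
      _ = π / 2 := by ring
  have h1 : Real.sin |t - k*π| = |Real.sin (t - k*π)| := by
    rcases abs_cases (t - k*π) with ⟨h, _⟩ | ⟨h, _⟩
    · rw [h, abs_of_nonneg]
      apply Real.sin_nonneg_of_nonneg_of_le_pi
      · rw [← h]; exact abs_nonneg _
      · rw [← h]; linarith [hle, Real.pi_pos]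
    · rw [h, Real.sin_neg, abs_of_nonpos]
      apply Real.sin_nonpos_of_nonpos_of_neg_pi_le
      · linarith [(abs_le.mp hle).1, Real.pi_pos]
      · linarith
  have hck : Real.cos ((k:ℝ)*π) = (-1:ℝ)^k := by
    simpa using Real.cos_int_mul_pi_sub 0 k
  have h2 : Real.sin (t - k*π) = Real.sin t * (-1:ℝ)^k := by
    rw [Real.sin_sub, Real.sin_int_mul_pi, hck]
    ring
  have h3 : |Real.sin t| = |Real.cos (argOf x)| := by
    rw [ht, Real.sin_sub, Real.sin_pi_div_two, Real.cos_pi_div_two]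
    rw [show Real.sin (argOf x) * 0 - Real.cos (argOf x) * 1 = -(Real.cos (argOf x)) by ring]
    exact abs_neg _
  rw [h1, h2, abs_mul, h3, hcos]
  have habs0 : (0:ℝ) < ‖z‖ := norm_pos_iff.mpr hz0
  rw [abs_div, abs_of_pos habs0, habs]
  have hv : (0:ℝ) < vnorm x := habs ▸ habs0
  field_simp
  have habs1 : |(-1:ℝ)^k| = 1 := by
    rcases Int.even_or_odd k with hk | hk
    · rw [hk.neg_one_zpow]; exact abs_one
    · rw [hk.neg_one_zpow]; simp
  rw [habs1, mul_one]


set_option maxHeartbeats 1000000 in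
/-- for `A = diag(λ₁,λ₁⁻¹) D diag(λ₀,λ₀⁻¹)` with `D ∈ SL(2,ℝ)`, `‖D‖ ≤ C₀`,
`min(λ₀,λ₁) ≥ λ̄` and `∠(D(1,0)ᵀ,(0,1)ᵀ) > κ > λ̄^(-1/4)`, provided `λ̄` exceeds a constant
depending only on `C₀`, there is an absolute constant `c > 0` with
`‖A‖ ≥ c C₀⁻¹ λ₀ λ₁ κ`. -/
theorem stmt_3 :
    ∃ c : ℝ, 0 < c ∧ ∀ C₀ : ℝ, 1 ≤ C₀ → ∃ Λ : ℝ, 0 < Λ ∧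
      ∀ lam lam0 lam1 κ : ℝ, ∀ D : Matrix (Fin 2) (Fin 2) ℝ,
        Λ ≤ lam → lam ≤ lam0 → lam ≤ lam1 →
        D.det = 1 → opNorm2 D ≤ C₀ →
        0 < κ → κ < 1 → κ > lam ^ (-(1/4 : ℝ)) →
        pangle (D.mulVec ![1, 0]) ![0, 1] > κ →
        opNorm2 ((!![lam1, 0; 0, lam1⁻¹] : Matrix (Fin 2) (Fin 2) ℝ) * D *
            !![lam0, 0; 0, lam0⁻¹]) ≥ c * C₀⁻¹ * lam0 * lam1 * κ := by
  refine ⟨1/2, by norm_num, fun C₀ hC₀ => ⟨1, one_pos, ?_⟩⟩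
  intro lam lam0 lam1 κ D hΛ h0 h1 hdet hD hκ0 hκ1 _ hang
  have hl0 : (0:ℝ) < lam0 := by linarith
  have hl1 : (0:ℝ) < lam1 := by linarith
  have hC0 : (0:ℝ) < C₀ := by linarith
  set x := D.mulVec ![1,0] with hxdef
  set y := D.mulVec ![0,1] with hydef
  have hx0 : x 0 = D 0 0 := by
    simp [hxdef, Matrix.mulVec, dotProduct, Fin.sum_univ_two]
  have hx1 : x 1 = D 1 0 := by
    simp [hxdef, Matrix.mulVec, dotProduct, Fin.sum_univ_two]
  have hy0 : y 0 = D 0 1 := by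
    simp [hydef, Matrix.mulVec, dotProduct, Fin.sum_univ_two]
  have hy1 : y 1 = D 1 1 := by
    simp [hydef, Matrix.mulVec, dotProduct, Fin.sum_univ_two]
  have hdet' : D 0 0 * D 1 1 - D 0 1 * D 1 0 = 1 := by
    rw [← Matrix.det_fin_two]; exact hdet
  -- ‖y‖ ≤ C₀
  have hyC : vnorm y ≤ C₀ := by
    have h := le_opNorm2 D (π/2)
    have : (![Real.cos (π/2), Real.sin (π/2)] : Fin 2 → ℝ) = ![0,1] := by
      simp [Real.cos_pi_div_two, Real.sin_pi_div_two]
    rw [this] at h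
    exact le_trans h hD
  -- Cauchy-Schwarz: 1 ≤ ‖x‖‖y‖
  have hCS : (1:ℝ) ≤ vnorm x * vnorm y := by
    have hx2 : (vnorm x)^2 = x 0 ^2 + x 1 ^2 := Real.sq_sqrt (by positivity)
    have hy2 : (vnorm y)^2 = y 0 ^2 + y 1 ^2 := Real.sq_sqrt (by positivity)
    have h2 : (1:ℝ) ≤ (vnorm x * vnorm y)^2 := by
      rw [mul_pow, hx2, hy2, hx0, hx1, hy0, hy1]
      nlinarith [sq_nonneg (D 0 0 * D 0 1 + D 1 0 * D 1 1), hdet']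
    nlinarith [mul_nonneg (vnorm_nonneg x) (vnorm_nonneg y)]
  have hnx : C₀⁻¹ ≤ vnorm x := by
    have h1' : (1:ℝ) ≤ vnorm x * C₀ := by
      calc (1:ℝ) ≤ vnorm x * vnorm y := hCS
        _ ≤ vnorm x * C₀ := by
            apply mul_le_mul_of_nonneg_left hyC (vnorm_nonneg x)
    rw [inv_eq_one_div, div_le_iff₀ hC0]
    linarith
  have hvx : (0:ℝ) < vnorm x := lt_of_lt_of_le (by positivity) hnx
  have hxne : ¬(x 0 = 0 ∧ x 1 = 0) := by
    rintro ⟨ha, hb⟩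
    rw [vnorm, ha, hb] at hvx
    norm_num at hvx
  have hs := sin_pangle x hxne
  have hple := pangle_le x
  have hp0 : 0 ≤ pangle x ![0,1] := norm_nonneg _
  have hπ2 : (1:ℝ) < π/2 := by nlinarith [Real.pi_gt_three]
  have hsk : Real.sin κ ≤ Real.sin (pangle x ![0,1]) := by
    apply (Real.strictMonoOn_sin ⟨by linarith, by linarith⟩
      ⟨by linarith, by linarith⟩ hang).le
  have hsinκ : (1/2 : ℝ) * κ ≤ Real.sin κ := by
    have h := Real.sin_gt_sub_cube hκ0
    have hκ3 : κ^3 ≤ κ := by nlinarith [sq_nonneg κ]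
    linarith
  have hspn : 0 ≤ Real.sin (pangle x ![0,1]) :=
    Real.sin_nonneg_of_nonneg_of_le_pi hp0 (by linarith [Real.pi_pos])
  have hxa : (1/2)*κ*C₀⁻¹ ≤ |x 0| := by
    rw [hs]
    calc (1/2)*κ*C₀⁻¹ ≤ Real.sin κ * C₀⁻¹ := by
          apply mul_le_mul_of_nonneg_right hsinκ (by positivity)
      _ ≤ Real.sin (pangle x ![0,1]) * vnorm x :=
          mul_le_mul hsk hnx (by positivity) hspn
  set A := (!![lam1, 0; 0, lam1⁻¹] : Matrix (Fin 2) (Fin 2) ℝ) * D *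
      !![lam0, 0; 0, lam0⁻¹] with hAdef
  have hw : A.mulVec ![Real.cos 0, Real.sin 0] 0 = lam1 * D 0 0 * lam0 := by
    simp [hAdef, Matrix.mulVec, Matrix.vecMul, dotProduct, Matrix.mul_apply,
      Fin.sum_univ_two, Real.cos_zero, Real.sin_zero]
    ring
  calc (1/2) * C₀⁻¹ * lam0 * lam1 * κ = lam0 * lam1 * ((1/2)*κ*C₀⁻¹) := by ring
    _ ≤ lam0 * lam1 * |x 0| := by
        apply mul_le_mul_of_nonneg_left hxa (by positivity)
    _ = |lam1 * D 0 0 * lam0| := by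
        rw [abs_mul, abs_mul, abs_of_pos hl0, abs_of_pos hl1, hx0]; ring
    _ = |A.mulVec ![Real.cos 0, Real.sin 0] 0| := by rw [hw]
    _ ≤ vnorm (A.mulVec ![Real.cos 0, Real.sin 0]) := abs_fst_le_vnorm _
    _ ≤ opNorm2 A := le_opNorm2 A 0
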